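/- If P is a complex polynomial of degree n having no zeros in the open unit disk, then the maximum of |P'(z)| over |z|=1 is at most (n/2) times the maximum of |P(z)| over |z|=1. -/

import Mathlib

open Polynomial Metric Set

noncomputable def maxSphere (P : Polynomial ℂ) : ℝ :=
  sSup ((fun w => ‖P.eval w‖) '' sphere (0:ℂ) 1)

noncomputable def minSphere (P : Polynomial ℂ) : ℝ :=
  sInf ((fun w => ‖P.eval w‖) '' sphere (0:ℂ) 1)


-- half-plane lemma
lemma re_le_half {z r : ℂ} (hz : norm z = 1) (hr : 1 ≤ norm r) (hne : z ≠ r) :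
    (z / (z - r)).re ≤ 1 / 2 := by
  have hzr : z - r ≠ 0 := sub_ne_zero.mpr hne
  set w : ℂ := z / (z - r) with hw
  have h1 : 1 - w = -r / (z - r) := by
    rw [hw]; field_simp; ring
  have h2 : norm w ≤ norm (1 - w) := by
    rw [h1, hw, norm_div, norm_div, norm_neg, hz]
    gcongr
  have h3 := sq_le_sq' (by linarith [norm_nonneg w, norm_nonneg (1-w)]) h2
  rw [Complex.sq_norm, Complex.sq_norm] at h3
  simp only [Complex.normSq_apply, Complex.sub_re, Complex.sub_im, Complex.one_re,
    Complex.one_im] at h3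
  nlinarith [h3]

-- |S| ≤ |n - S| when Re S ≤ n/2
lemma abs_le_abs_sub {S : ℂ} {n : ℕ} (h : S.re ≤ n / 2) :
    norm S ≤ norm ((n : ℂ) - S) := by
  have h3 : Complex.normSq S ≤ Complex.normSq ((n:ℂ) - S) := by
    simp only [Complex.normSq_apply, Complex.sub_re, Complex.sub_im, Complex.natCast_re,
      Complex.natCast_im]
    have : (0:ℝ) ≤ n := Nat.cast_nonneg n
    nlinarith
  have := Real.sqrt_le_sqrt h3
  rwa [← Complex.norm_def, ← Complex.norm_def] at this


lemma eval_derivative_prod (c z : ℂ) (S : Multiset ℂ) (h : ∀ r ∈ S, z ≠ r) :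
    eval z (derivative (C c * (S.map (fun r => X - C r)).prod)) =
      eval z (C c * (S.map (fun r => X - C r)).prod) * (S.map (fun r => (z - r)⁻¹)).sum := by
  induction S using Multiset.induction_on with
  | empty => simp
  | cons a s ih =>
    have ha : z - a ≠ 0 := sub_ne_zero.mpr (h a (Multiset.mem_cons_self a s))
    have ih' := ih (fun r hr => h r (Multiset.mem_cons_of_mem hr))
    rw [Multiset.map_cons, Multiset.prod_cons, Multiset.map_cons, Multiset.sum_cons]
    have hre : C c * ((X - C a) * (s.map (fun r => X - C r)).prod)
        = (X - C a) * (C c * (s.map (fun r => X - C r)).prod) := by ring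
    rw [hre, derivative_mul]
    simp only [derivative_sub, derivative_X, derivative_C, sub_zero, one_mul, eval_mul,
      eval_add, eval_sub, eval_X, eval_C]
    rw [ih']
    field_simp
    simp only [eval_mul, eval_C]; ring


lemma key_lemma (g : Polynomial ℂ) (hg : ∀ w : ℂ, norm w < 1 → eval w g ≠ 0)
    (z : ℂ) (hz : norm z = 1) :
    norm (eval z (derivative g)) ≤
      norm ((g.natDegree : ℂ) * eval z g - z * eval z (derivative g)) := by
  by_cases h0 : eval z g = 0
  · rw [h0, mul_zero, zero_sub, norm_neg, norm_mul, hz, one_mul]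
  · -- factorization
    have hcard : g.roots.card = g.natDegree :=
      splits_iff_card_roots.mp (IsAlgClosed.splits g)
    have hfac := Polynomial.C_leadingCoeff_mul_prod_multiset_X_sub_C hcard
    have hne : ∀ r ∈ g.roots, z ≠ r := by
      intro r hr hzr
      subst hzr
      exact h0 (isRoot_of_mem_roots hr)
    have hT := eval_derivative_prod g.leadingCoeff z g.roots hne
    rw [hfac] at hT
    set T : ℂ := (g.roots.map (fun r => (z - r)⁻¹)).sum with hTdef
    set S : ℂ := z * T with hSdef
    -- Re S ≤ n/2
    have hre : S.re ≤ (g.natDegree : ℝ) / 2 := by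
      have h4 : S = (g.roots.map (fun r => z / (z - r))).sum := by
        rw [hSdef, hTdef, ← Multiset.sum_map_mul_left]
        simp [div_eq_mul_inv]
      rw [h4]
      have h5 : ((g.roots.map (fun r => z / (z - r))).sum).re
          = ((g.roots.map (fun r => z / (z - r))).map Complex.re).sum :=
        map_multiset_sum Complex.reAddGroupHom _
      rw [h5, Multiset.map_map]
      have h6 : ((g.roots.map (Complex.re ∘ fun r => z / (z - r)))).sum
          ≤ (Multiset.card (g.roots.map (Complex.re ∘ fun r => z / (z - r)))) • (1/2 : ℝ) := by
        apply Multiset.sum_le_card_nsmul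
        intro x hx
        obtain ⟨r, hr, rfl⟩ := Multiset.mem_map.mp hx
        have hr1 : 1 ≤ norm r := by
          by_contra hlt
          exact hg r (by linarith [lt_of_not_ge hlt]) (isRoot_of_mem_roots hr)
        exact re_le_half hz hr1 (hne r hr)
      rw [Multiset.card_map, hcard] at h6
      calc _ ≤ (g.natDegree : ℕ) • (1/2:ℝ) := h6
        _ = (g.natDegree : ℝ)/2 := by
            rw [nsmul_eq_mul]; ring
    have hkey : norm S ≤ norm ((g.natDegree : ℂ) - S) := abs_le_abs_sub (by exact_mod_cast hre)
    have hzg : z * eval z (derivative g) = eval z g * S := by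
      rw [hT, hSdef]; ring
    have h2 : (g.natDegree : ℂ) * eval z g - z * eval z (derivative g)
        = eval z g * ((g.natDegree : ℂ) - S) := by rw [hzg]; ring
    calc norm (eval z (derivative g))
        = norm (z * eval z (derivative g)) := by rw [norm_mul, hz, one_mul]
      _ = norm (eval z g) * norm S := by rw [hzg, norm_mul]
      _ ≤ norm (eval z g) * norm ((g.natDegree : ℂ) - S) := by
          exact mul_le_mul_of_nonneg_left hkey (norm_nonneg _)
      _ = norm ((g.natDegree : ℂ) * eval z g - z * eval z (derivative g)) := by
          rw [h2, norm_mul]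


lemma coeff_X_mul_derivative (Q : Polynomial ℂ) (k : ℕ) :
    (X * derivative Q).coeff k = k * Q.coeff k := by
  cases k with
  | zero => simp
  | succ m => rw [coeff_X_mul, coeff_derivative]; push_cast; ring

lemma eval_reflect (z : ℂ) (hz : z ≠ 0) (N : ℕ) (Q : Polynomial ℂ) (hQ : Q.natDegree ≤ N) :
    eval z (reflect N Q) = z ^ N * eval z⁻¹ Q := by
  have hinv : z⁻¹ ≠ 0 := inv_ne_zero hz
  have : Invertible z⁻¹ := invertibleOfNonzero hinv
  have h := eval₂_reflect_mul_pow (RingHom.id ℂ) z⁻¹ N Q hQ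
  rw [invOf_eq_inv, inv_inv] at h
  have h2 : eval z (reflect N Q) * z⁻¹ ^ N = eval z⁻¹ Q := h
  field_simp at h2
  rw [one_div] at h2; rw [← h2, mul_comm, mul_assoc, ← mul_pow, inv_mul_cancel₀ hz, one_pow, mul_one]

lemma deriv_reflect (n : ℕ) (Q : Polynomial ℂ) (hQ : Q.natDegree ≤ n) :
    derivative (reflect n Q) = reflect (n - 1) (C (n:ℂ) * Q - X * derivative Q) := by
  ext k
  rw [coeff_derivative, coeff_reflect, coeff_reflect, coeff_sub, coeff_C_mul,
    coeff_X_mul_derivative]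
  by_cases hk : k + 1 ≤ n
  · rw [revAt_le hk, revAt_le (by omega : k ≤ n - 1)]
    have h1 : n - 1 - k = n - (k + 1) := by omega
    rw [h1]
    rw [Nat.cast_sub hk]
    push_cast
    ring
  · have hrev : (revAt (n-1)) k = k := by
      rcases Nat.lt_or_ge (n-1) k with h | h
      · exact revAt_eq_self_of_lt h
      · have h0 : k = 0 ∧ n = 0 := by omega
        rcases h0 with ⟨rfl, rfl⟩
        simp
    rw [revAt_eq_self_of_lt (by omega), hrev]
    have h2 : Q.coeff (k + 1) = 0 := coeff_eq_zero_of_natDegree_lt (by omega)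
    rcases eq_or_lt_of_le (by omega : n ≤ k) with h | h
    · subst h
      rw [h2]
      ring
    · rw [h2, coeff_eq_zero_of_natDegree_lt (by omega)]
      ring

lemma nPQ_reflect (n : ℕ) (Q : Polynomial ℂ) (hQ : Q.natDegree ≤ n) :
    C (n:ℂ) * reflect n Q - X * derivative (reflect n Q) = reflect n (X * derivative Q) := by
  ext k
  rw [coeff_sub, coeff_C_mul, coeff_X_mul_derivative, coeff_reflect, coeff_reflect,
    coeff_X_mul_derivative]
  by_cases hk : k ≤ n
  · rw [revAt_le hk]
    rw [Nat.cast_sub hk]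
    ring
  · rw [revAt_eq_self_of_lt (by omega), coeff_eq_zero_of_natDegree_lt (by omega)]
    ring

lemma natDegree_aux_le (n : ℕ) (Q : Polynomial ℂ) (hQ : Q.natDegree ≤ n) :
    (C (n:ℂ) * Q - X * derivative Q).natDegree ≤ n - 1 := by
  rw [natDegree_le_iff_coeff_eq_zero]
  intro m hm
  rw [coeff_sub, coeff_C_mul, coeff_X_mul_derivative]
  rcases eq_or_lt_of_le (by omega : n ≤ m) with h | h
  · subst h; ring
  · rw [coeff_eq_zero_of_natDegree_lt (by omega)]; ring

lemma natDegree_XD_le (n : ℕ) (Q : Polynomial ℂ) (hQ : Q.natDegree ≤ n) :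
    (X * derivative Q).natDegree ≤ n := by
  rw [natDegree_le_iff_coeff_eq_zero]
  intro m hm
  rw [coeff_X_mul_derivative, coeff_eq_zero_of_natDegree_lt (by omega)]
  ring

lemma eval_map_conj (Q : Polynomial ℂ) (w : ℂ) :
    eval w (Q.map (starRingEnd ℂ)) = (starRingEnd ℂ) (eval ((starRingEnd ℂ) w) Q) := by
  rw [eval_map]
  have h := eval₂_at_apply (p := Q) (starRingEnd ℂ) ((starRingEnd ℂ) w)
  simpa using h


lemma natDegree_reflect_le' (n : ℕ) (Q : Polynomial ℂ) (hQ : Q.natDegree ≤ n) :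
    (reflect n Q).natDegree ≤ n := by
  rw [natDegree_le_iff_coeff_eq_zero]
  intro m hm
  rw [coeff_reflect, revAt_eq_self_of_lt hm]
  exact coeff_eq_zero_of_natDegree_lt (by omega)


lemma maxmod (Q : Polynomial ℂ) (M : ℝ)
    (hM : ∀ z : ℂ, norm z = 1 → norm (eval z Q) ≤ M)
    (w : ℂ) (hw : norm w ≤ 1) : norm (eval w Q) ≤ M := by
  have hd : DiffContOnCl ℂ (fun z => eval z Q) (ball (0:ℂ) 1) :=
    (Q.differentiable).diffContOnCl
  have hfront : ∀ z ∈ frontier (ball (0:ℂ) 1), ‖eval z Q‖ ≤ M := by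
    intro z hzf
    rw [frontier_ball (0:ℂ) one_ne_zero] at hzf
    have : norm z = 1 := by simpa [Complex.dist_eq] using hzf
    simpa using hM z this
  have hcl : w ∈ closure (ball (0:ℂ) 1) := by
    rw [closure_ball (0:ℂ) one_ne_zero]
    simpa [Complex.dist_eq] using hw
  simpa using
    Complex.norm_le_of_forall_mem_frontier_norm_le isBounded_ball hd hfront hcl



theorem stmt_2 (n : ℕ) (P : Polynomial ℂ) (hP : P.natDegree = n)
    (hz : ∀ z : ℂ, ‖z‖ < 1 → P.eval z ≠ 0) :
    ∀ z : ℂ, ‖z‖ = 1 →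
      ‖(derivative P).eval z‖ ≤ (n / 2 : ℝ) * maxSphere P := by
  subst hP
  intro z hzone
  by_cases hn0 : P.natDegree = 0
  · obtain ⟨c, rfl⟩ := natDegree_eq_zero.mp hn0
    simp
  have hn1 : 1 ≤ P.natDegree := Nat.one_le_iff_ne_zero.mpr hn0
  set n := P.natDegree with hn
  have hz0 : z ≠ 0 := by
    intro h; rw [h] at hzone; simp at hzone
  have hzinv : z⁻¹ = (starRingEnd ℂ) z := by
    rw [Complex.inv_def, Complex.normSq_eq_norm_sq, hzone]; simp
  have hzconjinv : (starRingEnd ℂ) z⁻¹ = z := by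
    rw [hzinv, Complex.conj_conj]
  -- basic facts about M
  set M := maxSphere P with hM
  have hbdd : BddAbove ((fun w => norm (P.eval w)) '' sphere (0:ℂ) 1) :=
    ((isCompact_sphere (0:ℂ) 1).image (continuous_norm.comp (Polynomial.continuous P))).bddAbove
  have hMle : ∀ w : ℂ, norm w = 1 → norm (P.eval w) ≤ M := by
    intro w hw
    exact le_csSup hbdd ⟨w, by simpa [Complex.dist_eq] using hw, rfl⟩
  have hM0 : 0 < M :=
    lt_of_lt_of_le (norm_pos_iff.mpr (hz 0 (by simp))) (maxmod P M hMle 0 (by simp))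
  -- the reflected polynomial
  set Pc := P.map (starRingEnd ℂ) with hPcdef
  have hPc : Pc.natDegree = n := natDegree_map _
  set Pst := reflect n Pc with hPstdef
  have hPst_le : ∀ w : ℂ, norm w = 1 → norm (eval w Pst) ≤ M := by
    intro w hw
    have hw0 : w ≠ 0 := by intro h; rw [h] at hw; simp at hw
    have hwinv : (starRingEnd ℂ) w⁻¹ = w := by
      rw [Complex.inv_def, Complex.normSq_eq_norm_sq, hw]
      simp
    rw [hPstdef, eval_reflect w hw0 n Pc hPc.le, hPcdef, eval_map_conj, hwinv,
      norm_mul, norm_pow, hw, one_pow, one_mul, Complex.norm_conj]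
    exact hMle w hw
  set A : ℂ := (derivative P).eval z with hA
  set B : ℂ := (n : ℂ) * P.eval z - z * A with hB
  -- the main inequality parametrized over μ
  have main : ∀ μ : ℂ, M < norm μ →
      norm B ≤ norm (z^(n-1) * (starRingEnd ℂ) A - (n:ℂ) * μ) := by
    intro μ hμ
    set g := Pst - C μ with hg
    have hgz : ∀ w : ℂ, norm w < 1 → eval w g ≠ 0 := by
      intro w hw heq
      rw [hg, eval_sub, eval_C, sub_eq_zero] at heq
      have h1 : norm (eval w Pst) ≤ M := maxmod Pst M hPst_le w hw.le
      rw [heq] at h1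
      linarith
    have hgdeg : g.natDegree = n := by
      have hle : g.natDegree ≤ n := by
        apply natDegree_sub_le_iff_left (by simpa using hn1 : (C μ).natDegree ≤ n) |>.mpr
        exact natDegree_reflect_le' n Pc hPc.le
      have hcoeff : g.coeff n ≠ 0 := by
        rw [hg, coeff_sub, coeff_C, if_neg hn0, sub_zero, hPstdef, coeff_reflect,
          revAt_le le_rfl, Nat.sub_self, hPcdef, coeff_map]
        intro hceq
        rw [_root_.map_eq_zero, coeff_zero_eq_eval_zero] at hceq
        exact hz 0 (by simp) hceq
      exact le_antisymm hle (le_natDegree_of_ne_zero hcoeff)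
    have hk := key_lemma g hgz z hzone
    rw [hgdeg] at hk
    -- eval z (derivative g) = z^(n-1) * conj B
    have hCmap : C ((n:ℕ):ℂ) * Pc - X * derivative Pc
        = (C ((n:ℕ):ℂ) * P - X * derivative P).map (starRingEnd ℂ) := by
      rw [Polynomial.map_sub, Polynomial.map_mul, Polynomial.map_mul, map_C, map_X,
        derivative_map]
      norm_num
      exact Or.inl hPcdef
    have hdg : eval z (derivative g) = z^(n-1) * (starRingEnd ℂ) B := by
      rw [hg, derivative_sub, derivative_C, sub_zero, hPstdef,
        deriv_reflect n Pc hPc.le,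
        eval_reflect z hz0 (n-1) _ (natDegree_aux_le n Pc hPc.le), hCmap,
        eval_map_conj, hzconjinv]
      congr 1
      rw [hB, hA]
      simp [map_sub, map_mul]
    -- n * eval z g - z * eval z (derivative g) = z^(n-1) * conj A - n * μ
    have hng : (n:ℂ) * eval z g - z * eval z (derivative g)
        = z^(n-1) * (starRingEnd ℂ) A - (n:ℂ) * μ := by
      have h1 : (n:ℂ) * eval z Pst - z * eval z (derivative Pst)
          = z^(n-1) * (starRingEnd ℂ) A := by
        have h2 := congrArg (eval z) (nPQ_reflect n Pc hPc.le)
        rw [eval_sub, eval_mul, eval_mul, eval_C, eval_X,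
          eval_reflect z hz0 n _ (natDegree_XD_le n Pc hPc.le), eval_mul, eval_X,
          hPcdef, derivative_map, eval_map_conj, hzconjinv] at h2
        rw [← hPcdef, ← hPstdef] at h2
        rw [h2, hA]
        have hzn : z ^ n = z^(n-1) * z := by
          rw [← pow_succ]
          congr 1
          omega
        rw [hzn]
        field_simp
      rw [hg, eval_sub, eval_C]
      have h3 : derivative (Pst - C μ) = derivative Pst := by
        rw [derivative_sub, derivative_C, sub_zero]
      rw [h3]
      rw [mul_sub, sub_sub, add_comm, ← sub_sub, h1]
    rw [hng, hdg] at hk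
    calc norm B = norm (z^(n-1) * (starRingEnd ℂ) B) := by
          rw [norm_mul, norm_pow, hzone, one_pow, one_mul, Complex.norm_conj]
      _ ≤ _ := hk
  -- key lemma applied to P itself
  have hAB : norm A ≤ norm B := key_lemma P hz z hzone
  -- for every t > M
  have hsum : ∀ t : ℝ, M < t → norm A + norm B ≤ n * t := by
    intro t ht
    have ht0 : 0 < t := hM0.trans ht
    have hn0' : (0:ℝ) < n := by exact_mod_cast hn1
    have hmain : norm B ≤ |norm A - n * t| := by
      by_cases hA0 : A = 0
      · have h := main (t:ℂ) (by rwa [Complex.norm_real, Real.norm_eq_abs, abs_of_pos ht0])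
        rw [hA0] at h
        simp only [map_zero, mul_zero, zero_sub, norm_neg] at h
        calc norm B ≤ norm ((n:ℂ) * (t:ℂ)) := h
          _ = |norm A - n * t| := by
              rw [hA0, norm_zero, zero_sub, abs_neg, norm_mul, Complex.norm_natCast,
                Complex.norm_real, Real.norm_eq_abs, abs_of_pos ht0, abs_of_pos (by positivity)]
      · set a := norm A with ha
        have ha0 : 0 < a := norm_pos_iff.mpr hA0
        set μ : ℂ := ((t / a : ℝ) : ℂ) * (z^(n-1) * (starRingEnd ℂ) A) with hμdef
        have hμabs : norm μ = t := by
          rw [hμdef, norm_mul, norm_mul, norm_pow, hzone, one_pow, one_mul,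
            Complex.norm_conj, Complex.norm_real, Real.norm_eq_abs, ← ha, abs_of_pos (by positivity)]
          field_simp
        have h := main μ (by rw [hμabs]; exact ht)
        have hexpr : z^(n-1) * (starRingEnd ℂ) A - (n:ℂ) * μ
            = (((1 : ℝ) - n * (t/a) : ℝ) : ℂ) * (z^(n-1) * (starRingEnd ℂ) A) := by
          rw [hμdef]
          push_cast
          ring
        rw [hexpr, norm_mul, norm_mul, norm_pow, hzone, one_pow, one_mul,
          Complex.norm_conj, ← ha, Complex.norm_real, Real.norm_eq_abs] at h
        calc norm B ≤ |1 - n * (t/a)| * a := h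
          _ = |(1 - (n:ℝ) * (t/a)) * a| := by rw [abs_mul, abs_of_pos ha0]
          _ = |a - n * t| := by
              congr 1
              have hane : a ≠ 0 := ne_of_gt ha0
              field_simp
          _ = |norm A - n * t| := by rw [ha]
    rcases le_or_gt (norm A) (n * t) with h | h
    · rw [abs_of_nonpos (by linarith)] at hmain
      linarith
    · rw [abs_of_pos (by linarith)] at hmain
      nlinarith
  -- conclude a + b ≤ n * M
  have hfinal : norm A + norm B ≤ n * M := by
    by_contra hcon
    push_neg at hcon
    have hn0' : (0:ℝ) < n := by exact_mod_cast hn1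
    have ht : M < (M + (norm A + norm B) / n) / 2 := by
      have h1 : M < (norm A + norm B) / n := by
        rw [lt_div_iff₀ hn0']
        nlinarith
      linarith
    have h2 := hsum _ ht
    have h3 : (n:ℝ) * ((M + (norm A + norm B) / n) / 2)
        = (n * M + (norm A + norm B)) / 2 := by
      field_simp
    rw [h3] at h2
    linarith
  have h2A : 2 * norm A ≤ n * M := by linarith
  have hgoal : norm A ≤ (n / 2 : ℝ) * M := by linarith
  exact hgoal
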